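/- Let m₀ = 15 and M = 8997/8668 (so M > 1). Let n ≥ m₀ and k₁,…,k_n ≥ 1 be integers with k_{n−m₀+1} = k_{n−m₀+2} = ⋯ = k_n = 2 (so the last m₀ matrices in the product A₃(k₁)⋯A₃(k_n) form A₃(2)^{m₀}). Then the recursion sequences satisfy a_{m₀} ≥ M·z_{m₀}, b_{m₀} ≥ M·(y_{m₀} + z_{m₀}), and c_{m₀} ≥ M·(x_{m₀} + y_{m₀}). -/
import Mathlib


/-- The Bruin–Troubetzkoy matrix `A₃(k)` with rows `(0, k, k−1)`, `(1, 0, 0)`, `(0, 1, 1)`. -/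
def A3 (k : ℤ) : Matrix (Fin 3) (Fin 3) ℝ :=
  !![0, (k : ℝ), (k : ℝ) - 1; 1, 0, 0; 0, 1, 1]

/-- The matrix `B₃(k)` with rows `(0, 1, 0)`, `(1, 0, 1)`, `(k−1, 0, k)`. -/
def B3 (k : ℤ) : Matrix (Fin 3) (Fin 3) ℝ :=
  !![0, 1, 0; 1, 0, 1; (k : ℝ) - 1, 0, (k : ℝ)]

/-- With `m₀ = 15` and `M = 8997/8668 > 1`: if the last `m₀` indices satisfy `k_i = 2`,
then the recursion sequences (the columns of the partial products from the right) satisfy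
the domination estimates at step `m₀`.  The entries `k₁, …, k_n` are `k 1, …, k n`. -/
theorem domination_at_m0 (n : ℕ) (hn : 15 ≤ n) (k : ℕ → ℤ)
    (hk : ∀ i, 1 ≤ i → i ≤ n → 1 ≤ k i)
    (hk2 : ∀ i, n - 15 + 1 ≤ i → i ≤ n → k i = 2)
    (x y z a b c : ℕ → ℝ)
    (hx1 : x 1 = (k n : ℝ)) (hy1 : y 1 = 0) (hz1 : z 1 = 1)
    (ha1 : a 1 = 0) (hb1 : b 1 = 1) (hc1 : c 1 = (k n : ℝ))
    (hx : ∀ j, 1 ≤ j → j ≤ n - 1 → x (j + 1) = ((k (n - j) : ℝ) - 1) * z j + (k (n - j) : ℝ) * y j)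
    (hy : ∀ j, 1 ≤ j → j ≤ n - 1 → y (j + 1) = x j)
    (hz : ∀ j, 1 ≤ j → j ≤ n - 1 → z (j + 1) = y j + z j)
    (ha : ∀ j, 1 ≤ j → j ≤ n - 1 → a (j + 1) = b j)
    (hb : ∀ j, 1 ≤ j → j ≤ n - 1 → b (j + 1) = a j + c j)
    (hc : ∀ j, 1 ≤ j → j ≤ n - 1 → c (j + 1) = ((k (n - j) : ℝ) - 1) * a j + (k (n - j) : ℝ) * c j) :
    a 15 ≥ ((8997 : ℝ) / 8668) * z 15 ∧
    b 15 ≥ ((8997 : ℝ) / 8668) * (y 15 + z 15) ∧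
    c 15 ≥ ((8997 : ℝ) / 8668) * (x 15 + y 15) := by
  have hkn : (k n : ℝ) = 2 := by rw [hk2 n (by omega) le_rfl]; norm_num
  have hk' : ∀ j : ℕ, 1 ≤ j → j ≤ 14 → (k (n - j) : ℝ) = 2 := by
    intro j h1 h2; rw [hk2 (n - j) (by omega) (by omega)]; norm_num
  have V1x : x 1 = 2 := by rw [hx1, hkn]
  have V1y := hy1
  have V1z := hz1
  have V1a := ha1
  have V1b := hb1
  have V1c : c 1 = 2 := by rw [hc1, hkn]
  have V2x : x 2 = 1 := by rw [hx 1 (by omega) (by omega), hk' 1 (by omega) (by omega), V1z, V1y]; norm_num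
  have V2y : y 2 = 2 := by rw [hy 1 (by omega) (by omega), V1x]
  have V2z : z 2 = 1 := by rw [hz 1 (by omega) (by omega), V1y, V1z]; norm_num
  have V2a : a 2 = 1 := by rw [ha 1 (by omega) (by omega), V1b]
  have V2b : b 2 = 2 := by rw [hb 1 (by omega) (by omega), V1a, V1c]; norm_num
  have V2c : c 2 = 4 := by rw [hc 1 (by omega) (by omega), hk' 1 (by omega) (by omega), V1a, V1c]; norm_num
  have V3x : x 3 = 5 := by rw [hx 2 (by omega) (by omega), hk' 2 (by omega) (by omega), V2z, V2y]; norm_num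
  have V3y : y 3 = 1 := by rw [hy 2 (by omega) (by omega), V2x]
  have V3z : z 3 = 3 := by rw [hz 2 (by omega) (by omega), V2y, V2z]; norm_num
  have V3a : a 3 = 2 := by rw [ha 2 (by omega) (by omega), V2b]
  have V3b : b 3 = 5 := by rw [hb 2 (by omega) (by omega), V2a, V2c]; norm_num
  have V3c : c 3 = 9 := by rw [hc 2 (by omega) (by omega), hk' 2 (by omega) (by omega), V2a, V2c]; norm_num
  have V4x : x 4 = 5 := by rw [hx 3 (by omega) (by omega), hk' 3 (by omega) (by omega), V3z, V3y]; norm_num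
  have V4y : y 4 = 5 := by rw [hy 3 (by omega) (by omega), V3x]
  have V4z : z 4 = 4 := by rw [hz 3 (by omega) (by omega), V3y, V3z]; norm_num
  have V4a : a 4 = 5 := by rw [ha 3 (by omega) (by omega), V3b]
  have V4b : b 4 = 11 := by rw [hb 3 (by omega) (by omega), V3a, V3c]; norm_num
  have V4c : c 4 = 20 := by rw [hc 3 (by omega) (by omega), hk' 3 (by omega) (by omega), V3a, V3c]; norm_num
  have V5x : x 5 = 14 := by rw [hx 4 (by omega) (by omega), hk' 4 (by omega) (by omega), V4z, V4y]; norm_num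
  have V5y : y 5 = 5 := by rw [hy 4 (by omega) (by omega), V4x]
  have V5z : z 5 = 9 := by rw [hz 4 (by omega) (by omega), V4y, V4z]; norm_num
  have V5a : a 5 = 11 := by rw [ha 4 (by omega) (by omega), V4b]
  have V5b : b 5 = 25 := by rw [hb 4 (by omega) (by omega), V4a, V4c]; norm_num
  have V5c : c 5 = 45 := by rw [hc 4 (by omega) (by omega), hk' 4 (by omega) (by omega), V4a, V4c]; norm_num
  have V6x : x 6 = 19 := by rw [hx 5 (by omega) (by omega), hk' 5 (by omega) (by omega), V5z, V5y]; norm_num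
  have V6y : y 6 = 14 := by rw [hy 5 (by omega) (by omega), V5x]
  have V6z : z 6 = 14 := by rw [hz 5 (by omega) (by omega), V5y, V5z]; norm_num
  have V6a : a 6 = 25 := by rw [ha 5 (by omega) (by omega), V5b]
  have V6b : b 6 = 56 := by rw [hb 5 (by omega) (by omega), V5a, V5c]; norm_num
  have V6c : c 6 = 101 := by rw [hc 5 (by omega) (by omega), hk' 5 (by omega) (by omega), V5a, V5c]; norm_num
  have V7x : x 7 = 42 := by rw [hx 6 (by omega) (by omega), hk' 6 (by omega) (by omega), V6z, V6y]; norm_num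
  have V7y : y 7 = 19 := by rw [hy 6 (by omega) (by omega), V6x]
  have V7z : z 7 = 28 := by rw [hz 6 (by omega) (by omega), V6y, V6z]; norm_num
  have V7a : a 7 = 56 := by rw [ha 6 (by omega) (by omega), V6b]
  have V7b : b 7 = 126 := by rw [hb 6 (by omega) (by omega), V6a, V6c]; norm_num
  have V7c : c 7 = 227 := by rw [hc 6 (by omega) (by omega), hk' 6 (by omega) (by omega), V6a, V6c]; norm_num
  have V8x : x 8 = 66 := by rw [hx 7 (by omega) (by omega), hk' 7 (by omega) (by omega), V7z, V7y]; norm_num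
  have V8y : y 8 = 42 := by rw [hy 7 (by omega) (by omega), V7x]
  have V8z : z 8 = 47 := by rw [hz 7 (by omega) (by omega), V7y, V7z]; norm_num
  have V8a : a 8 = 126 := by rw [ha 7 (by omega) (by omega), V7b]
  have V8b : b 8 = 283 := by rw [hb 7 (by omega) (by omega), V7a, V7c]; norm_num
  have V8c : c 8 = 510 := by rw [hc 7 (by omega) (by omega), hk' 7 (by omega) (by omega), V7a, V7c]; norm_num
  have V9x : x 9 = 131 := by rw [hx 8 (by omega) (by omega), hk' 8 (by omega) (by omega), V8z, V8y]; norm_num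
  have V9y : y 9 = 66 := by rw [hy 8 (by omega) (by omega), V8x]
  have V9z : z 9 = 89 := by rw [hz 8 (by omega) (by omega), V8y, V8z]; norm_num
  have V9a : a 9 = 283 := by rw [ha 8 (by omega) (by omega), V8b]
  have V9b : b 9 = 636 := by rw [hb 8 (by omega) (by omega), V8a, V8c]; norm_num
  have V9c : c 9 = 1146 := by rw [hc 8 (by omega) (by omega), hk' 8 (by omega) (by omega), V8a, V8c]; norm_num
  have V10x : x 10 = 221 := by rw [hx 9 (by omega) (by omega), hk' 9 (by omega) (by omega), V9z, V9y]; norm_num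
  have V10y : y 10 = 131 := by rw [hy 9 (by omega) (by omega), V9x]
  have V10z : z 10 = 155 := by rw [hz 9 (by omega) (by omega), V9y, V9z]; norm_num
  have V10a : a 10 = 636 := by rw [ha 9 (by omega) (by omega), V9b]
  have V10b : b 10 = 1429 := by rw [hb 9 (by omega) (by omega), V9a, V9c]; norm_num
  have V10c : c 10 = 2575 := by rw [hc 9 (by omega) (by omega), hk' 9 (by omega) (by omega), V9a, V9c]; norm_num
  have V11x : x 11 = 417 := by rw [hx 10 (by omega) (by omega), hk' 10 (by omega) (by omega), V10z, V10y]; norm_num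
  have V11y : y 11 = 221 := by rw [hy 10 (by omega) (by omega), V10x]
  have V11z : z 11 = 286 := by rw [hz 10 (by omega) (by omega), V10y, V10z]; norm_num
  have V11a : a 11 = 1429 := by rw [ha 10 (by omega) (by omega), V10b]
  have V11b : b 11 = 3211 := by rw [hb 10 (by omega) (by omega), V10a, V10c]; norm_num
  have V11c : c 11 = 5786 := by rw [hc 10 (by omega) (by omega), hk' 10 (by omega) (by omega), V10a, V10c]; norm_num
  have V12x : x 12 = 728 := by rw [hx 11 (by omega) (by omega), hk' 11 (by omega) (by omega), V11z, V11y]; norm_num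
  have V12y : y 12 = 417 := by rw [hy 11 (by omega) (by omega), V11x]
  have V12z : z 12 = 507 := by rw [hz 11 (by omega) (by omega), V11y, V11z]; norm_num
  have V12a : a 12 = 3211 := by rw [ha 11 (by omega) (by omega), V11b]
  have V12b : b 12 = 7215 := by rw [hb 11 (by omega) (by omega), V11a, V11c]; norm_num
  have V12c : c 12 = 13001 := by rw [hc 11 (by omega) (by omega), hk' 11 (by omega) (by omega), V11a, V11c]; norm_num
  have V13x : x 13 = 1341 := by rw [hx 12 (by omega) (by omega), hk' 12 (by omega) (by omega), V12z, V12y]; norm_num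
  have V13y : y 13 = 728 := by rw [hy 12 (by omega) (by omega), V12x]
  have V13z : z 13 = 924 := by rw [hz 12 (by omega) (by omega), V12y, V12z]; norm_num
  have V13a : a 13 = 7215 := by rw [ha 12 (by omega) (by omega), V12b]
  have V13b : b 13 = 16212 := by rw [hb 12 (by omega) (by omega), V12a, V12c]; norm_num
  have V13c : c 13 = 29213 := by rw [hc 12 (by omega) (by omega), hk' 12 (by omega) (by omega), V12a, V12c]; norm_num
  have V14x : x 14 = 2380 := by rw [hx 13 (by omega) (by omega), hk' 13 (by omega) (by omega), V13z, V13y]; norm_num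
  have V14y : y 14 = 1341 := by rw [hy 13 (by omega) (by omega), V13x]
  have V14z : z 14 = 1652 := by rw [hz 13 (by omega) (by omega), V13y, V13z]; norm_num
  have V14a : a 14 = 16212 := by rw [ha 13 (by omega) (by omega), V13b]
  have V14b : b 14 = 36428 := by rw [hb 13 (by omega) (by omega), V13a, V13c]; norm_num
  have V14c : c 14 = 65641 := by rw [hc 13 (by omega) (by omega), hk' 13 (by omega) (by omega), V13a, V13c]; norm_num
  have V15x : x 15 = 4334 := by rw [hx 14 (by omega) (by omega), hk' 14 (by omega) (by omega), V14z, V14y]; norm_num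
  have V15y : y 15 = 2380 := by rw [hy 14 (by omega) (by omega), V14x]
  have V15z : z 15 = 2993 := by rw [hz 14 (by omega) (by omega), V14y, V14z]; norm_num
  have V15a : a 15 = 36428 := by rw [ha 14 (by omega) (by omega), V14b]
  have V15b : b 15 = 81853 := by rw [hb 14 (by omega) (by omega), V14a, V14c]; norm_num
  have V15c : c 15 = 147494 := by rw [hc 14 (by omega) (by omega), hk' 14 (by omega) (by omega), V14a, V14c]; norm_num
  rw [V15a, V15b, V15c, V15x, V15y, V15z]
  norm_num
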